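/- (Lifting Fractions Lemma) Let P : E → B be a pseudofunctor between bicategories that is a 1-fibration, and let W be a class of 1-cells of B that admits a right bicalculus of fractions. Then the class C_W of P-Cartesian 1-cells of E whose image under P lies in W admits a right bicalculus of fractions in E. -/

import Mathlib

open CategoryTheory Bicategory

universe w₁ v₁ u₁ w₂ v₂ u₂ w v u

namespace Paper

section Fractions

variable (B : Type u) [Bicategory.{w, v} B]

/-- A 1-cell is an equivalence if there is a 1-cell in the opposite direction and invertible
2-cells relating the two composites to identities. -/
def IsEquiv1Cell {a b : B} (f : a ⟶ b) : Prop :=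
  ∃ g : b ⟶ a, Nonempty (f ≫ g ≅ 𝟙 a) ∧ Nonempty (g ≫ f ≅ 𝟙 b)

/-- Axiom (0-Frc). -/
def Frc0 (W : ∀ ⦃a b : B⦄, (a ⟶ b) → Prop) : Prop :=
  ∀ ⦃A B' C : B⦄ (w : A ⟶ B') (f : C ⟶ B'), W w →
    ∃ (D : B) (u : D ⟶ C) (h : D ⟶ A), W u ∧ Nonempty (u ≫ f ≅ h ≫ w)

/-- Axiom (1-Frc). -/
def Frc1 (W : ∀ ⦃a b : B⦄, (a ⟶ b) → Prop) : Prop :=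
  ∀ ⦃B' C D : B⦄ (w : C ⟶ D) (f g : B' ⟶ C), W w → ∀ α : f ≫ w ⟶ g ≫ w,
    ∃ (A : B) (u : A ⟶ B'), W u ∧ ∃ β : u ≫ f ⟶ u ≫ g,
      (u ◁ α) ≫ (α_ u g w).inv = (α_ u f w).inv ≫ (β ▷ w)

/-- Axiom (2-Frc). -/
def Frc2 (W : ∀ ⦃a b : B⦄, (a ⟶ b) → Prop) : Prop :=
  ∀ ⦃B' C D : B⦄ (w : C ⟶ D) (f g : B' ⟶ C), W w → ∀ α β : f ⟶ g,
    α ▷ w = β ▷ w → ∃ (A : B) (u : A ⟶ B'), W u ∧ u ◁ α = u ◁ β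

/-- A class of 1-cells admits a right bicalculus of fractions. -/
structure RightBicalculus (W : ∀ ⦃a b : B⦄, (a ⟶ b) → Prop) : Prop where
  equivalences : ∀ ⦃a b : B⦄ (f : a ⟶ b), IsEquiv1Cell B f → W f
  comp : ∀ ⦃a b c : B⦄ (f : a ⟶ b) (g : b ⟶ c), W f → W g → W (f ≫ g)
  iso_closed : ∀ ⦃a b : B⦄ (f w : a ⟶ b), W w → Nonempty (f ≅ w) → W f
  frc0 : Frc0 B W
  frc1 : Frc1 B W
  frc2 : Frc2 B W

end Fractions

section Cartesian

variable {E : Type u₁} [Bicategory.{w₁, v₁} E] {B : Type u₂} [Bicategory.{w₂, v₂} B]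

/-- A 1-cell `f : X ⟶ Y` of `E` is `P`-Cartesian. -/
def IsCartesian (P : Pseudofunctor E B) {X Y : E} (f : X ⟶ Y) : Prop :=
  (∀ (Z : E) (g : Z ⟶ Y) (h : P.obj Z ⟶ P.obj X) (α : h ≫ P.map f ≅ P.map g),
    ∃ (hHat : Z ⟶ X) (aHat : hHat ≫ f ≅ g) (bHat : P.map hHat ≅ h),
      (bHat.hom ▷ P.map f) ≫ α.hom = (P.mapComp hHat f).inv ≫ P.map₂ aHat.hom) ∧
  (∀ (Z : E) (g h : Z ⟶ X) (α : g ≫ f ⟶ h ≫ f) (β : P.map g ⟶ P.map h),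
    P.map₂ α = (P.mapComp g f).hom ≫ (β ▷ P.map f) ≫ (P.mapComp h f).inv →
      ∃ bHat : g ⟶ h, P.map₂ bHat = β ∧ bHat ▷ f = α) ∧
  (∀ (Z : E) (g h : Z ⟶ X) (α β : g ⟶ h), P.map₂ α = P.map₂ β → α ▷ f = β ▷ f → α = β)

/-- `P` is a 1-fibration: every 1-cell into the image of an object admits a Cartesian lift. -/
def Is1Fibration (P : Pseudofunctor E B) : Prop :=
  ∀ (E₀ : E) ⦃B₀ : B⦄ (f : B₀ ⟶ P.obj E₀),
    ∃ (Bhat : E) (fhat : Bhat ⟶ E₀) (hB : P.obj Bhat = B₀),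
      IsCartesian P fhat ∧ P.map fhat = cast (congrArg (fun x => (x ⟶ P.obj E₀)) hB.symm) f

end Cartesian

section Helpers

open Category

variable {B₀ : Type u} [Bicategory.{w, v} B₀]

lemma Paper.tri {Z a b : B₀} (f : a ⟶ b) (g : b ⟶ a) (η : 𝟙 a ⟶ f ≫ g) (eps : g ≫ f ⟶ 𝟙 b)
    (T : η ▷ f ≫ (α_ f g f).hom ≫ f ◁ eps = (λ_ f).hom ≫ (ρ_ f).inv) (l : Z ⟶ a) :
    ((ρ_ l).inv ≫ l ◁ η ≫ (α_ l f g).inv) ▷ f ≫ (α_ (l ≫ f) g f).hom ≫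
      (l ≫ f) ◁ eps ≫ (ρ_ (l ≫ f)).hom = 𝟙 (l ≫ f) := by
  calc ((ρ_ l).inv ≫ l ◁ η ≫ (α_ l f g).inv) ▷ f ≫ (α_ (l ≫ f) g f).hom ≫
      (l ≫ f) ◁ eps ≫ (ρ_ (l ≫ f)).hom
      = 𝟙 _ ⊗≫ l ◁ (η ▷ f ≫ (α_ f g f).hom ≫ f ◁ eps) ⊗≫ 𝟙 _ := by bicategory
    _ = 𝟙 _ ⊗≫ l ◁ ((λ_ f).hom ≫ (ρ_ f).inv) ⊗≫ 𝟙 _ := by rw [T]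
    _ = 𝟙 (l ≫ f) := by bicategory

lemma Paper.chunk_eq {Z a b : B₀} (f : a ⟶ b) (g : b ⟶ a) (η : 𝟙 a ≅ f ≫ g) (eps : g ≫ f ⟶ 𝟙 b)
    (T : η.hom ▷ f ≫ (α_ f g f).hom ≫ f ◁ eps = (λ_ f).hom ≫ (ρ_ f).inv) (m : Z ⟶ a) :
    ((α_ m f g).hom ≫ m ◁ η.inv ≫ (ρ_ m).hom) ▷ f =
      (α_ (m ≫ f) g f).hom ≫ (m ≫ f) ◁ eps ≫ (ρ_ (m ≫ f)).hom := by
  have h1 := Paper.tri f g η.hom eps T m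
  have h2 : (((ρ_ m).inv ≫ m ◁ η.hom ≫ (α_ m f g).inv) ▷ f) ≫
      (((α_ m f g).hom ≫ m ◁ η.inv ≫ (ρ_ m).hom) ▷ f) = 𝟙 _ := by
    rw [← comp_whiskerRight]; simp
  rw [← cancel_epi (((ρ_ m).inv ≫ m ◁ η.hom ≫ (α_ m f g).inv) ▷ f), h2, ← h1]

lemma Paper.conj_eq_self {Z a b : B₀} (f : a ⟶ b) (g : b ⟶ a) (η : 𝟙 a ≅ f ≫ g)
    {k l : Z ⟶ a} (γ : k ⟶ l) :
    (ρ_ k).inv ≫ k ◁ η.hom ≫ (α_ k f g).inv ≫ (γ ▷ f) ▷ g ≫ (α_ l f g).hom ≫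
      l ◁ η.inv ≫ (ρ_ l).hom = γ := by
  calc (ρ_ k).inv ≫ k ◁ η.hom ≫ (α_ k f g).inv ≫ (γ ▷ f) ▷ g ≫ (α_ l f g).hom ≫
      l ◁ η.inv ≫ (ρ_ l).hom
      = 𝟙 _ ⊗≫ (k ◁ η.hom ≫ γ ▷ (f ≫ g)) ⊗≫ l ◁ η.inv ⊗≫ 𝟙 _ := by bicategory
    _ = 𝟙 _ ⊗≫ γ ▷ 𝟙 a ⊗≫ (l ◁ η.hom ≫ l ◁ η.inv) ⊗≫ 𝟙 _ := by
        rw [whisker_exchange]; bicategory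
    _ = γ := by rw [← Bicategory.whiskerLeft_comp, Iso.hom_inv_id]; bicategory

lemma Paper.push_through {Z a b : B₀} (f : a ⟶ b) (g : b ⟶ a) (eps : g ≫ f ⟶ 𝟙 b)
    {k l : Z ⟶ a} (α : k ≫ f ⟶ l ≫ f) :
    (α ▷ g) ▷ f ≫ (α_ (l ≫ f) g f).hom ≫ (l ≫ f) ◁ eps ≫ (ρ_ (l ≫ f)).hom =
      (α_ (k ≫ f) g f).hom ≫ (k ≫ f) ◁ eps ≫ (ρ_ (k ≫ f)).hom ≫ α := by
  calc (α ▷ g) ▷ f ≫ (α_ (l ≫ f) g f).hom ≫ (l ≫ f) ◁ eps ≫ (ρ_ (l ≫ f)).hom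
      = 𝟙 _ ⊗≫ (α ▷ (g ≫ f) ≫ (l ≫ f) ◁ eps) ⊗≫ 𝟙 _ := by bicategory
    _ = 𝟙 _ ⊗≫ ((k ≫ f) ◁ eps ≫ α ▷ 𝟙 b) ⊗≫ 𝟙 _ := by rw [← whisker_exchange]
    _ = (α_ (k ≫ f) g f).hom ≫ (k ≫ f) ◁ eps ≫ (ρ_ (k ≫ f)).hom ≫ α := by bicategory

lemma Paper.lift_whisker {Z a b : B₀} (f : a ⟶ b) (g : b ⟶ a) (η : 𝟙 a ≅ f ≫ g)
    (eps : g ≫ f ⟶ 𝟙 b)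
    (T : η.hom ▷ f ≫ (α_ f g f).hom ≫ f ◁ eps = (λ_ f).hom ≫ (ρ_ f).inv)
    {k l : Z ⟶ a} (α : k ≫ f ⟶ l ≫ f) :
    ((ρ_ k).inv ≫ k ◁ η.hom ≫ (α_ k f g).inv ≫ α ▷ g ≫ (α_ l f g).hom ≫
      l ◁ η.inv ≫ (ρ_ l).hom) ▷ f = α := by
  have hc := Paper.chunk_eq f g η eps T l
  have h1 := Paper.tri f g η.hom eps T k
  calc ((ρ_ k).inv ≫ k ◁ η.hom ≫ (α_ k f g).inv ≫ α ▷ g ≫ (α_ l f g).hom ≫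
      l ◁ η.inv ≫ (ρ_ l).hom) ▷ f
      = ((ρ_ k).inv ≫ k ◁ η.hom ≫ (α_ k f g).inv) ▷ f ≫ (α ▷ g) ▷ f ≫
        ((α_ l f g).hom ≫ l ◁ η.inv ≫ (ρ_ l).hom) ▷ f := by
        simp only [comp_whiskerRight, assoc]
    _ = ((ρ_ k).inv ≫ k ◁ η.hom ≫ (α_ k f g).inv) ▷ f ≫ (α ▷ g) ▷ f ≫
        (α_ (l ≫ f) g f).hom ≫ (l ≫ f) ◁ eps ≫ (ρ_ (l ≫ f)).hom := by rw [hc]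
    _ = ((ρ_ k).inv ≫ k ◁ η.hom ≫ (α_ k f g).inv) ▷ f ≫ (α_ (k ≫ f) g f).hom ≫
        (k ≫ f) ◁ eps ≫ (ρ_ (k ≫ f)).hom ≫ α := by rw [Paper.push_through]
    _ = α := by
        simp only [← assoc]; simp only [assoc]; rw [reassoc_of% h1]

lemma Paper.part_i_key {Z a b : B₀} (F : a ⟶ b) (G : b ⟶ a) (ηB : 𝟙 a ≅ F ≫ G)
    (εB : G ≫ F ⟶ 𝟙 b)
    (T : ηB.hom ▷ F ≫ (α_ F G F).hom ≫ F ◁ εB = (λ_ F).hom ≫ (ρ_ F).inv)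
    {h : Z ⟶ a} {K : Z ⟶ b} (α : h ≫ F ≅ K) :
    (α.inv ▷ G ≫ (α_ h F G).hom ≫ h ◁ ηB.inv ≫ (ρ_ h).hom) ▷ F ≫ α.hom =
      (α_ K G F).hom ≫ K ◁ εB ≫ (ρ_ K).hom := by
  have hc := Paper.chunk_eq F G ηB εB T h
  calc (α.inv ▷ G ≫ (α_ h F G).hom ≫ h ◁ ηB.inv ≫ (ρ_ h).hom) ▷ F ≫ α.hom
      = (α.inv ▷ G) ▷ F ≫ ((α_ h F G).hom ≫ h ◁ ηB.inv ≫ (ρ_ h).hom) ▷ F ≫ α.hom := by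
        simp only [comp_whiskerRight, assoc]
    _ = (α.inv ▷ G) ▷ F ≫ ((α_ (h ≫ F) G F).hom ≫ (h ≫ F) ◁ εB ≫ (ρ_ (h ≫ F)).hom) ≫
        α.hom := by rw [hc]
    _ = 𝟙 _ ⊗≫ (α.inv ▷ (G ≫ F) ≫ (h ≫ F) ◁ εB) ⊗≫ α.hom := by bicategory
    _ = 𝟙 _ ⊗≫ (K ◁ εB ≫ α.inv ▷ 𝟙 b) ⊗≫ α.hom := by rw [← whisker_exchange]
    _ = (α_ K G F).hom ≫ K ◁ εB ≫ (ρ_ K).hom ≫ (α.inv ≫ α.hom) := by bicategory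
    _ = (α_ K G F).hom ≫ K ◁ εB ≫ (ρ_ K).hom := by rw [Iso.inv_hom_id, comp_id]

end Helpers

section PHelpers

open Category

variable {E : Type u₁} [Bicategory.{w₁, v₁} E] {B : Type u₂} [Bicategory.{w₂, v₂} B]
variable (P : Pseudofunctor E B)

lemma Paper.map₂_associator_inv {a b c d : E} (f : a ⟶ b) (g : b ⟶ c) (h : c ⟶ d) :
    P.map₂ (α_ f g h).inv = (P.mapComp f (g ≫ h)).hom ≫ P.map f ◁ (P.mapComp g h).hom ≫
      (α_ (P.map f) (P.map g) (P.map h)).inv ≫ (P.mapComp f g).inv ▷ P.map h ≫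
      (P.mapComp (f ≫ g) h).inv := by
  rw [← cancel_epi (P.map₂ (α_ f g h).hom), PrelaxFunctor.map₂_hom_inv, P.map₂_associator]
  simp

lemma Paper.map₂_right_unitor_inv {a b : E} (f : a ⟶ b) :
    P.map₂ (ρ_ f).inv = (ρ_ (P.map f)).inv ≫ P.map f ◁ (P.mapId b).inv ≫
      (P.mapComp f (𝟙 b)).inv := by
  rw [← cancel_epi (P.map₂ (ρ_ f).hom), PrelaxFunctor.map₂_hom_inv, P.map₂_right_unitor]
  simp

lemma Paper.map_left_triangle {a b : E} (f : a ⟶ b) (g : b ⟶ a) (η : 𝟙 a ⟶ f ≫ g)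
    (eps : g ≫ f ⟶ 𝟙 b)
    (H : η ▷ f ≫ (α_ f g f).hom ≫ f ◁ eps = (λ_ f).hom ≫ (ρ_ f).inv) :
    ((P.mapId a).inv ≫ P.map₂ η ≫ (P.mapComp f g).hom) ▷ P.map f ≫
      (α_ (P.map f) (P.map g) (P.map f)).hom ≫
      P.map f ◁ ((P.mapComp g f).inv ≫ P.map₂ eps ≫ (P.mapId b).hom) =
      (λ_ (P.map f)).hom ≫ (ρ_ (P.map f)).inv := by
  have H' : η ▷ f ≫ (α_ f g f).hom ≫ f ◁ eps ≫ (ρ_ f).hom = (λ_ f).hom := by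
    rw [← assoc, ← assoc, assoc (η ▷ f), H]; simp
  have H2 := congrArg P.map₂ H'
  rw [PrelaxFunctor.map₂_comp, PrelaxFunctor.map₂_comp, PrelaxFunctor.map₂_comp,
    P.map₂_whisker_right, P.map₂_whisker_left, P.map₂_associator, P.map₂_left_unitor,
    P.map₂_right_unitor] at H2
  simp only [assoc, Iso.inv_hom_id_assoc, cancel_epi] at H2
  simp only [comp_whiskerRight, Bicategory.whiskerLeft_comp, assoc]
  rw [Iso.eq_comp_inv]
  simp only [assoc]
  rw [H2]
  simp

lemma Paper.isCartesian_of_equiv {X Y : E} (f : X ⟶ Y) (hf : Paper.IsEquiv1Cell E f) :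
    Paper.IsCartesian P f := by
  obtain ⟨g, ⟨i₁⟩, ⟨i₂⟩⟩ := hf
  obtain ⟨η, eps, T⟩ : ∃ (η : 𝟙 X ≅ f ≫ g) (eps : g ≫ f ≅ 𝟙 Y),
      η.hom ▷ f ≫ (α_ f g f).hom ≫ f ◁ eps.hom = (λ_ f).hom ≫ (ρ_ f).inv := by
    refine ⟨i₁.symm, adjointifyCounit i₁.symm i₂, ?_⟩
    have h := congrArg Iso.hom (adjointifyCounit_left_triangle i₁.symm i₂)
    rw [leftZigzagIso_hom] at h
    have h' : leftZigzag i₁.symm.hom (adjointifyCounit i₁.symm i₂).hom =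
        (λ_ f).hom ≫ (ρ_ f).inv := by simpa using h
    rw [← h']
    simp [leftZigzag, bicategoricalComp]
  obtain ⟨ηB, hηB, hηBi⟩ : ∃ i : 𝟙 (P.obj X) ≅ P.map f ≫ P.map g,
      i.hom = (P.mapId X).inv ≫ P.map₂ η.hom ≫ (P.mapComp f g).hom ∧
      i.inv = (P.mapComp f g).inv ≫ P.map₂ η.inv ≫ (P.mapId X).hom :=
    ⟨(P.mapId X).symm ≪≫ P.map₂Iso η ≪≫ P.mapComp f g, by simp, by simp⟩
  have TB : ηB.hom ▷ P.map f ≫ (α_ (P.map f) (P.map g) (P.map f)).hom ≫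
      P.map f ◁ ((P.mapComp g f).inv ≫ P.map₂ eps.hom ≫ (P.mapId Y).hom) =
      (λ_ (P.map f)).hom ≫ (ρ_ (P.map f)).inv := by
    rw [hηB]; exact Paper.map_left_triangle P f g η.hom eps.hom T
  refine ⟨?_, ?_, ?_⟩
  · intro Z k h α
    refine ⟨k ≫ g, α_ k g f ≪≫ whiskerLeftIso k eps ≪≫ ρ_ k,
      P.mapComp k g ≪≫ whiskerRightIso α.symm (P.map g) ≪≫ α_ h (P.map f) (P.map g) ≪≫
        whiskerLeftIso h ηB.symm ≪≫ ρ_ h, ?_⟩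
    have expand : (P.mapComp (k ≫ g) f).inv ≫
        P.map₂ ((α_ k g f).hom ≫ k ◁ eps.hom ≫ (ρ_ k).hom) =
        (P.mapComp k g).hom ▷ P.map f ≫ (α_ (P.map k) (P.map g) (P.map f)).hom ≫
          P.map k ◁ ((P.mapComp g f).inv ≫ P.map₂ eps.hom ≫ (P.mapId Y).hom) ≫
          (ρ_ (P.map k)).hom := by
      simp only [PrelaxFunctor.map₂_comp, Pseudofunctor.map₂_associator,
        Pseudofunctor.map₂_whisker_left, Pseudofunctor.map₂_right_unitor, assoc,
        Iso.inv_hom_id_assoc, Bicategory.whiskerLeft_comp]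
    simp only [Iso.trans_hom, Iso.symm_hom, whiskerRightIso_hom, whiskerLeftIso_hom]
    rw [expand]
    simp only [comp_whiskerRight, assoc]
    rw [← cancel_epi ((P.mapComp k g).inv ▷ P.map f)]
    simp only [← assoc]
    simp only [inv_hom_whiskerRight_assoc, Iso.inv_hom_id_assoc, inv_hom_whiskerRight]
    simp only [assoc]
    have key := Paper.part_i_key (P.map f) (P.map g) ηB
      ((P.mapComp g f).inv ≫ P.map₂ eps.hom ≫ (P.mapId Y).hom) TB (α := α)
    simp only [Bicategory.whiskerLeft_comp, assoc] at key ⊢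
    rw [← key]
    simp only [comp_whiskerRight, assoc]
  · intro Z k l α β hyp
    refine ⟨(ρ_ k).inv ≫ k ◁ η.hom ≫ (α_ k f g).inv ≫ α ▷ g ≫ (α_ l f g).hom ≫
      l ◁ η.inv ≫ (ρ_ l).hom, ?_, Paper.lift_whisker f g η eps.hom T α⟩
    have expand : P.map₂ ((ρ_ k).inv ≫ k ◁ η.hom ≫ (α_ k f g).inv ≫ α ▷ g ≫
        (α_ l f g).hom ≫ l ◁ η.inv ≫ (ρ_ l).hom) =
        (ρ_ (P.map k)).inv ≫ P.map k ◁ ηB.hom ≫ (α_ (P.map k) (P.map f) (P.map g)).inv ≫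
          (β ▷ P.map f) ▷ P.map g ≫ (α_ (P.map l) (P.map f) (P.map g)).hom ≫
          P.map l ◁ ηB.inv ≫ (ρ_ (P.map l)).hom := by
      rw [hηB, hηBi]
      simp only [PrelaxFunctor.map₂_comp, Pseudofunctor.map₂_whisker_left,
        Pseudofunctor.map₂_whisker_right, Pseudofunctor.map₂_associator,
        Paper.map₂_associator_inv, Paper.map₂_right_unitor_inv,
        Pseudofunctor.map₂_right_unitor, hyp, assoc, Iso.inv_hom_id_assoc,
        Iso.hom_inv_id_assoc, comp_whiskerRight, Bicategory.whiskerLeft_comp,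
        inv_hom_whiskerRight_assoc, hom_inv_whiskerRight_assoc]
    rw [expand]
    exact Paper.conj_eq_self (P.map f) (P.map g) ηB β
  · intro Z k l α β _ hww
    have e1 := Paper.conj_eq_self f g η α
    have e2 := Paper.conj_eq_self f g η β
    rw [← e1, ← e2, hww]

lemma Paper.isCartesian_of_iso {X Y : E} {f w : X ⟶ Y} (e : f ≅ w)
    (hw : Paper.IsCartesian P w) : Paper.IsCartesian P f := by
  obtain ⟨C1, C2, C3⟩ := hw
  refine ⟨?_, ?_, ?_⟩
  · intro Z k h α
    obtain ⟨hH, aH, bH, heq⟩ := C1 Z k h (whiskerLeftIso h (P.map₂Iso e).symm ≪≫ α)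
    simp only [Iso.trans_hom, whiskerLeftIso_hom, Iso.symm_hom, PrelaxFunctor.map₂Iso_inv]
      at heq
    refine ⟨hH, whiskerLeftIso hH e ≪≫ aH, bH, ?_⟩
    simp only [Iso.trans_hom, whiskerLeftIso_hom]
    have w1 : P.map hH ◁ P.map₂ e.hom ≫ bH.hom ▷ P.map w =
        bH.hom ▷ P.map f ≫ h ◁ P.map₂ e.hom := whisker_exchange _ _
    calc bH.hom ▷ P.map f ≫ α.hom
        = bH.hom ▷ P.map f ≫ h ◁ P.map₂ e.hom ≫ h ◁ P.map₂ e.inv ≫ α.hom := by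
          simp only [← Bicategory.whiskerLeft_comp_assoc, PrelaxFunctor.map₂_hom_inv]
          simp
      _ = P.map hH ◁ P.map₂ e.hom ≫ bH.hom ▷ P.map w ≫ h ◁ P.map₂ e.inv ≫ α.hom := by
          rw [← assoc, ← w1, assoc]
      _ = P.map hH ◁ P.map₂ e.hom ≫ (P.mapComp hH w).inv ≫ P.map₂ aH.hom := by
          rw [← heq]
      _ = (P.mapComp hH f).inv ≫ P.map₂ (hH ◁ e.hom ≫ aH.hom) := by
          rw [PrelaxFunctor.map₂_comp, Pseudofunctor.map₂_whisker_left]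
          simp
  · intro Z k l α β hyp
    have hcond : P.map₂ ((k ◁ e.inv) ≫ α ≫ (l ◁ e.hom)) =
        (P.mapComp k w).hom ≫ β ▷ P.map w ≫ (P.mapComp l w).inv := by
      simp only [PrelaxFunctor.map₂_comp, Pseudofunctor.map₂_whisker_left, hyp, assoc,
        Iso.inv_hom_id_assoc]
      rw [← whisker_exchange_assoc]
      simp only [← Bicategory.whiskerLeft_comp_assoc, PrelaxFunctor.map₂_inv_hom]
      simp
    obtain ⟨bH, hb1, hb2⟩ := C2 Z k l ((k ◁ e.inv) ≫ α ≫ (l ◁ e.hom)) β hcond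
    refine ⟨bH, hb1, ?_⟩
    have w2 : k ◁ e.hom ≫ bH ▷ w = bH ▷ f ≫ l ◁ e.hom := whisker_exchange bH e.hom
    rw [← cancel_mono (l ◁ e.hom), ← w2, hb2]
    simp only [← Bicategory.whiskerLeft_comp_assoc, Iso.hom_inv_id]
    simp
  · intro Z k l α β hm hww
    apply C3 Z k l α β hm
    have wa := whisker_exchange α e.hom
    have wb := whisker_exchange β e.hom
    rw [← cancel_epi (k ◁ e.hom), wa, wb, hww]

lemma Paper.isCartesian_comp {X Y Z₀ : E} {f : X ⟶ Y} {g : Y ⟶ Z₀}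
    (hf : Paper.IsCartesian P f) (hg : Paper.IsCartesian P g) :
    Paper.IsCartesian P (f ≫ g) := by
  obtain ⟨F1, F2, F3⟩ := hf; obtain ⟨G1, G2, G3⟩ := hg
  refine ⟨?_, ?_, ?_⟩
  · intro Z k h α
    obtain ⟨k₁, a₁, b₁, e₁⟩ := G1 Z k (h ≫ P.map f)
      (α_ h (P.map f) (P.map g) ≪≫ whiskerLeftIso h (P.mapComp f g).symm ≪≫ α)
    simp only [Iso.trans_hom, whiskerLeftIso_hom, Iso.symm_hom] at e₁
    obtain ⟨k₂, a₂, b₂, e₂⟩ := F1 Z k₁ h b₁.symm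
    simp only [Iso.symm_hom] at e₂
    refine ⟨k₂, (α_ k₂ f g).symm ≪≫ whiskerRightIso a₂ g ≪≫ a₁, b₂, ?_⟩
    simp only [Iso.trans_hom, Iso.symm_hom, whiskerRightIso_hom]
    have e₂' : (P.mapComp k₂ f).inv ≫ P.map₂ a₂.hom = b₂.hom ▷ P.map f ≫ b₁.inv :=
      e₂.symm
    have e₁' : (P.mapComp k₁ g).inv ≫ P.map₂ a₁.hom =
        b₁.hom ▷ P.map g ≫ (α_ h (P.map f) (P.map g)).hom ≫ h ◁ (P.mapComp f g).inv ≫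
          α.hom := by rw [← e₁]
    calc b₂.hom ▷ P.map (f ≫ g) ≫ α.hom
        = b₂.hom ▷ P.map (f ≫ g) ≫ h ◁ (P.mapComp f g).hom ≫ h ◁ (P.mapComp f g).inv ≫
          α.hom := by
          simp only [← Bicategory.whiskerLeft_comp_assoc, Iso.hom_inv_id]
          simp
      _ = P.map k₂ ◁ (P.mapComp f g).hom ≫ b₂.hom ▷ (P.map f ≫ P.map g) ≫
          h ◁ (P.mapComp f g).inv ≫ α.hom := by rw [← whisker_exchange_assoc]
      _ = P.map k₂ ◁ (P.mapComp f g).hom ≫ (α_ (P.map k₂) (P.map f) (P.map g)).inv ≫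
          (b₂.hom ▷ P.map f) ▷ P.map g ≫ (α_ h (P.map f) (P.map g)).hom ≫
          h ◁ (P.mapComp f g).inv ≫ α.hom := by
          rw [Bicategory.whiskerRight_comp_assoc]
      _ = P.map k₂ ◁ (P.mapComp f g).hom ≫ (α_ (P.map k₂) (P.map f) (P.map g)).inv ≫
          ((b₂.hom ▷ P.map f ≫ b₁.inv) ▷ P.map g) ≫
          ((P.mapComp k₁ g).inv ≫ P.map₂ a₁.hom) := by
          rw [e₁']; simp only [comp_whiskerRight, assoc]
          simp
      _ = P.map k₂ ◁ (P.mapComp f g).hom ≫ (α_ (P.map k₂) (P.map f) (P.map g)).inv ≫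
          (((P.mapComp k₂ f).inv ≫ P.map₂ a₂.hom) ▷ P.map g) ≫
          ((P.mapComp k₁ g).inv ≫ P.map₂ a₁.hom) := by rw [e₂']
      _ = (P.mapComp k₂ (f ≫ g)).inv ≫
          P.map₂ ((α_ k₂ f g).inv ≫ a₂.hom ▷ g ≫ a₁.hom) := by
          simp only [PrelaxFunctor.map₂_comp, Paper.map₂_associator_inv P,
            Pseudofunctor.map₂_whisker_right, assoc, Iso.inv_hom_id_assoc,
            comp_whiskerRight]
  · intro Z k l α β hyp
    have hcond : P.map₂ ((α_ k f g).hom ≫ α ≫ (α_ l f g).inv) =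
        (P.mapComp (k ≫ f) g).hom ≫
          ((P.mapComp k f).hom ≫ β ▷ P.map f ≫ (P.mapComp l f).inv) ▷ P.map g ≫
          (P.mapComp (l ≫ f) g).inv := by
      rw [PrelaxFunctor.map₂_comp, PrelaxFunctor.map₂_comp, P.map₂_associator,
        Paper.map₂_associator_inv P, hyp]
      simp only [assoc, Iso.inv_hom_id_assoc, comp_whiskerRight]
      rw [whisker_exchange_assoc]
      simp
    obtain ⟨b₁, hb₁, hb₁w⟩ := G2 Z (k ≫ f) (l ≫ f)
      ((α_ k f g).hom ≫ α ≫ (α_ l f g).inv)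
      ((P.mapComp k f).hom ≫ β ▷ P.map f ≫ (P.mapComp l f).inv) hcond
    obtain ⟨b₂, hb₂, hb₂w⟩ := F2 Z k l b₁ β hb₁
    refine ⟨b₂, hb₂, ?_⟩
    have : b₂ ▷ (f ≫ g) = (α_ k f g).inv ≫ (b₂ ▷ f) ▷ g ≫ (α_ l f g).hom :=
      Bicategory.whiskerRight_comp _ _ _
    rw [this, hb₂w, hb₁w]; simp
  · intro Z k l α β hm hww
    apply F3 Z k l α β hm
    apply G3 Z (k ≫ f) (l ≫ f) (α ▷ f) (β ▷ f)
    · simp only [Pseudofunctor.map₂_whisker_right, hm]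
    · have h1 : ∀ γ : k ⟶ l, (γ ▷ f) ▷ g =
          (α_ k f g).hom ≫ γ ▷ (f ≫ g) ≫ (α_ l f g).inv := by
        intro γ; rw [Bicategory.whiskerRight_comp]; simp
      rw [h1, h1, hww]

end PHelpers

/-- Lifting Fractions Lemma: if `P : E ⥤ B` is a 1-fibration and `W` admits a right bicalculus of
fractions on `B`, then the class of `P`-Cartesian 1-cells lying over `W` admits a right
bicalculus of fractions on `E`. -/
theorem lifting_fractions {E : Type u₁} [Bicategory.{w₁, v₁} E]
    {B : Type u₂} [Bicategory.{w₂, v₂} B]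
    (P : Pseudofunctor E B) (hP : Is1Fibration P)
    (W : ∀ ⦃a b : B⦄, (a ⟶ b) → Prop) (hW : RightBicalculus B W) :
    RightBicalculus E (fun _ _ f => IsCartesian P f ∧ W (P.map f)) := by
  constructor
  · -- equivalences
    intro a b f hf
    refine ⟨Paper.isCartesian_of_equiv P f hf, hW.equivalences _ ?_⟩
    obtain ⟨g, ⟨i₁⟩, ⟨i₂⟩⟩ := hf
    exact ⟨P.map g, ⟨(P.mapComp f g).symm ≪≫ P.map₂Iso i₁ ≪≫ P.mapId a⟩,
      ⟨(P.mapComp g f).symm ≪≫ P.map₂Iso i₂ ≪≫ P.mapId b⟩⟩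
  · -- comp
    intro a b c f g hf hg
    exact ⟨Paper.isCartesian_comp P hf.1 hg.1,
      hW.iso_closed _ _ (hW.comp _ _ hf.2 hg.2) ⟨P.mapComp f g⟩⟩
  · -- iso_closed
    intro a b f w hw hne
    obtain ⟨e⟩ := hne
    exact ⟨Paper.isCartesian_of_iso P e hw.1, hW.iso_closed _ _ hw.2 ⟨P.map₂Iso e⟩⟩
  · -- frc0
    intro A B' C w f hw
    obtain ⟨D₀, u₀, h₀, hu₀, ⟨iso₀⟩⟩ := hW.frc0 (P.map w) (P.map f) hw.2
    obtain ⟨Dh, uh, hB, hcart, hmap⟩ := hP C u₀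
    subst hB
    replace hmap : P.map uh = u₀ := by simpa using hmap
    subst hmap
    obtain ⟨hH, aH, bH, -⟩ := hw.1.1 Dh (uh ≫ f) h₀
      (iso₀.symm ≪≫ (P.mapComp uh f).symm)
    exact ⟨Dh, uh, hH, ⟨hcart, hu₀⟩, ⟨aH.symm⟩⟩
  · -- frc1
    intro B' C D w f g hw α
    obtain ⟨A₀, u₀, hu₀, β₀, hβ₀⟩ := hW.frc1 (P.map w) (P.map f) (P.map g) hw.2
      ((P.mapComp f w).inv ≫ P.map₂ α ≫ (P.mapComp g w).hom)
    obtain ⟨Ah, uh, hB, hcart, hmap⟩ := hP B' u₀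
    subst hB
    replace hmap : P.map uh = u₀ := by simpa using hmap
    subst hmap
    have hcond : P.map₂ ((α_ uh f w).hom ≫ uh ◁ α ≫ (α_ uh g w).inv) =
        (P.mapComp (uh ≫ f) w).hom ≫
          ((P.mapComp uh f).hom ≫ β₀ ≫ (P.mapComp uh g).inv) ▷ P.map w ≫
          (P.mapComp (uh ≫ g) w).inv := by
      rw [PrelaxFunctor.map₂_comp, PrelaxFunctor.map₂_comp, P.map₂_associator,
        Paper.map₂_associator_inv P, Pseudofunctor.map₂_whisker_left]
      simp only [Category.assoc, Iso.inv_hom_id_assoc, comp_whiskerRight]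
      rw [← Bicategory.whiskerLeft_comp_assoc, ← Bicategory.whiskerLeft_comp_assoc]
      simp only [Category.assoc]
      rw [reassoc_of% hβ₀]
      simp
    obtain ⟨bH, hbm, hbw⟩ := hw.1.2.1 Ah (uh ≫ f) (uh ≫ g)
      ((α_ uh f w).hom ≫ uh ◁ α ≫ (α_ uh g w).inv)
      ((P.mapComp uh f).hom ≫ β₀ ≫ (P.mapComp uh g).inv) hcond
    refine ⟨Ah, uh, ⟨hcart, hu₀⟩, bH, ?_⟩
    rw [hbw]; simp
  · -- frc2
    intro B' C D w f g hw α β hww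
    have hstep : P.map₂ α ▷ P.map w = P.map₂ β ▷ P.map w := by
      have h2 := congrArg P.map₂ hww
      simp only [Pseudofunctor.map₂_whisker_right] at h2
      simpa using h2
    obtain ⟨A₀, u₀, hu₀, heq⟩ := hW.frc2 (P.map w) (P.map f) (P.map g) hw.2
      (P.map₂ α) (P.map₂ β) hstep
    obtain ⟨Ah, uh, hB, hcart, hmap⟩ := hP B' u₀
    subst hB
    replace hmap : P.map uh = u₀ := by simpa using hmap
    subst hmap
    refine ⟨Ah, uh, ⟨hcart, hu₀⟩, ?_⟩
    apply hw.1.2.2 Ah (uh ≫ f) (uh ≫ g) (uh ◁ α) (uh ◁ β)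
    · simp only [Pseudofunctor.map₂_whisker_left, heq]
    · simp only [whisker_assoc, hww]

end Paper
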